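/- For every integer l ≥ 0 and every integer r with 0 < r ≤ 2l+2, the 'swept' coefficient D_{r,-l-2,l} := Σ_{t=-r-1}^{-l-2} d_{r,t} (where d_{r,t} are the Laurent coefficients of (1-2x₁+x₁²)/(x₂-2x₁+x₁²) in |x₁|<|x₂|) has sign (-1)^{r+(-l-2)+1} = (-1)^{r+l+1}; i.e. (-1)^{r+l+1}·Σ_{t=-r-1}^{-l-2} d_{r,t} ≥ 0. -/

import Mathlib

open Finset

/-- Binomial coefficient with integer arguments, zero outside `0 ≤ k ≤ n`. -/
noncomputable def Cb (n k : ℤ) : ℚ :=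
  if 0 ≤ k ∧ k ≤ n then (n.toNat.choose k.toNat : ℚ) else 0

/-- Coefficient of `x₁^r x₂^s` in the Laurent expansion of `1/(x₂ - 2x₁ + x₁²)`
valid for `|x₁| < |x₂|`:  `e_{r,-k} = (-1)^{r-k+1} 2^{2k-2-r} C(k-1, 2k-2-r)`. -/
noncomputable def eCoef (r s : ℤ) : ℚ :=
  (-1 : ℚ) ^ (r + s + 1) * (2 : ℚ) ^ (-2 * s - 2 - r) * Cb (-s - 1) (-2 * s - 2 - r)

/-- Coefficient of `x₁^r x₂^s` in the Laurent expansion of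
`(1 - 2x₁ + x₁²)/(x₂ - 2x₁ + x₁²)` valid for `|x₁| < |x₂|`. -/
noncomputable def dCoef (r s : ℤ) : ℚ :=
  eCoef r s - 2 * eCoef (r - 1) s + eCoef (r - 2) s

lemma cb_nonneg (n k : ℤ) : 0 ≤ Cb n k := by
  unfold Cb; split_ifs <;> positivity

lemma cb_pascal (n k : ℤ) (hn : 0 ≤ n) : Cb (n+1) (k+1) = Cb n k + Cb n (k+1) := by
  unfold Cb
  by_cases hk : 0 ≤ k
  · by_cases hkn : k ≤ n
    · rw [if_pos ⟨by omega, by omega⟩, if_pos ⟨hk, hkn⟩]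
      have h1 : (n+1).toNat = n.toNat + 1 := by omega
      have h2 : (k+1).toNat = k.toNat + 1 := by omega
      rw [h1, h2, Nat.choose_succ_succ]
      by_cases hkn' : k + 1 ≤ n
      · rw [if_pos ⟨by omega, hkn'⟩]; push_cast [Nat.succ_eq_add_one]; ring
      · rw [if_neg (by omega)]
        have hkeq : k.toNat = n.toNat := by omega
        simp [hkeq, Nat.succ_eq_add_one, Nat.choose_succ_self]
    · rw [if_neg (by omega), if_neg (by omega), if_neg (by omega)]; ring
  · by_cases hk1 : k + 1 = 0
    · rw [hk1, if_pos ⟨le_refl 0, by omega⟩, if_neg (by omega), if_pos ⟨le_refl 0, hn⟩]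
      simp
    · rw [if_neg (by omega), if_neg (by omega), if_neg (by omega)]; ring

lemma neg_one_zpow_succ (n : ℤ) : (-1 : ℚ) ^ (n + 1) = -(-1 : ℚ) ^ n := by
  rw [zpow_add₀ (by norm_num : (-1:ℚ) ≠ 0)]; simp

lemma d_telescope (r t : ℤ) (ht : t ≤ -1) :
    dCoef r t = eCoef r t - eCoef r (t - 1) := by
  have hpas : Cb (-t) (-2*t - r) = Cb (-t-1) (-2*t-r-1) + Cb (-t-1) (-2*t-r) := by
    have := cb_pascal (-t - 1) (-2*t - r - 1) (by omega)
    rw [show -t - 1 + 1 = -t by ring, show -2*t - r - 1 + 1 = -2*t - r by ring] at this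
    exact this
  have E1 : eCoef r t
      = -((-1:ℚ)^(r+t)) * (2:ℚ)^(-2*t-2-r) * Cb (-t-1) (-2*t-2-r) := by
    unfold eCoef
    rw [show r + t + 1 = (r+t) + 1 by ring, neg_one_zpow_succ]
  have E2 : eCoef (r-1) t
      = (-1:ℚ)^(r+t) * (2 * (2:ℚ)^(-2*t-2-r)) * Cb (-t-1) (-2*t-r-1) := by
    unfold eCoef
    rw [show r - 1 + t + 1 = r + t by ring, show -2*t - 2 - (r-1) = (-2*t-2-r) + 1 by ring,
      zpow_add₀ (two_ne_zero : (2:ℚ) ≠ 0), show (-2*t-2-r) + 1 = -2*t-r-1 by ring, zpow_one]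
    ring
  have E3 : eCoef (r-2) t
      = -((-1:ℚ)^(r+t)) * (4 * (2:ℚ)^(-2*t-2-r)) * Cb (-t-1) (-2*t-r) := by
    unfold eCoef
    have hs : (-1:ℚ)^(r - 2 + t + 1) = -(-1:ℚ)^(r+t) := by
      have h := neg_one_zpow_succ (r + t - 1)
      have h2 := neg_one_zpow_succ (r + t - 1 + 1)
      rw [show r + t - 1 + 1 = r + t by ring] at h h2
      rw [show r - 2 + t + 1 = r + t - 1 by ring]
      linarith [h]
    rw [hs, show -2*t - 2 - (r-2) = (-2*t-2-r) + 2 by ring,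
      zpow_add₀ (two_ne_zero : (2:ℚ) ≠ 0), show (-2*t-2-r) + 2 = -2*t-r by ring,
      show (2:ℚ)^(2:ℤ) = 4 by norm_num]
    ring
  have E4 : eCoef r (t-1)
      = (-1:ℚ)^(r+t) * (4 * (2:ℚ)^(-2*t-2-r)) * Cb (-t) (-2*t-r) := by
    unfold eCoef
    rw [show r + (t-1) + 1 = r + t by ring, show -2*(t-1) - 2 - r = (-2*t-2-r) + 2 by ring,
      zpow_add₀ (two_ne_zero : (2:ℚ) ≠ 0), show (-2*t-2-r) + 2 = -2*t-r by ring,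
      show -(t-1) - 1 = -t by ring,
      show (2:ℚ)^(2:ℤ) = 4 by norm_num]
    ring
  unfold dCoef
  rw [E1, E2, E3, E4, hpas]
  ring

lemma e_bottom (r : ℤ) (hr : 0 ≤ r) : eCoef r (-r - 2) = 0 := by
  unfold eCoef
  have : ¬ (0 ≤ -2 * (-r - 2) - 2 - r ∧ -2 * (-r - 2) - 2 - r ≤ -(-r - 2) - 1) := by omega
  rw [Cb, if_neg this]
  ring

lemma sum_telescope (f : ℤ → ℚ) (a b : ℤ) (h : a - 1 ≤ b) :
    ∑ t ∈ Finset.Icc a b, (f t - f (t - 1)) = f b - f (a - 1) := by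
  obtain ⟨n, rfl⟩ : ∃ n : ℕ, b = a - 1 + n := ⟨(b - (a - 1)).toNat, by omega⟩
  clear h
  induction n with
  | zero =>
    rw [show a - 1 + ((0:ℕ):ℤ) = a - 1 by push_cast; ring,
      show Finset.Icc a (a - 1) = ∅ by apply Finset.Icc_eq_empty; omega]
    simp
  | succ n ih =>
    have hstep : a - 1 + ((n + 1 : ℕ) : ℤ) = (a - 1 + n) + 1 := by push_cast; ring
    have hins : Finset.Icc a ((a - 1 + n) + 1) = insert ((a - 1 + n) + 1) (Finset.Icc a (a - 1 + n)) := by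
      ext x; simp only [Finset.mem_Icc, Finset.mem_insert]; omega
    rw [hstep, hins, Finset.sum_insert (by simp only [Finset.mem_Icc]; omega), ih]
    ring

/-- The swept coefficient `D_{r,-l-2,l} = Σ_{t=-r-1}^{-l-2} d_{r,t}` has sign
`(-1)^{r+l+1}` for `l ≥ 0` and `0 < r ≤ 2l+2`. -/
theorem stmt19 (l r : ℤ) (hl : 0 ≤ l) (hr : 0 < r) (hr2 : r ≤ 2 * l + 2) :
    0 ≤ (-1 : ℚ) ^ (r + l + 1) * ∑ t ∈ Finset.Icc (-r - 1) (-l - 2), dCoef r t := by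
  by_cases hcase : -r - 1 ≤ -l - 2
  · have hsum : ∑ t ∈ Finset.Icc (-r - 1) (-l - 2), dCoef r t = eCoef r (-l - 2) := by
      rw [Finset.sum_congr rfl (fun t htmem => d_telescope r t (by
        simp only [Finset.mem_Icc] at htmem; omega)),
        sum_telescope (eCoef r) (-r - 1) (-l - 2) (by omega),
        show -r - 1 - 1 = -r - 2 by ring, e_bottom r (le_of_lt hr)]
      ring
    rw [hsum]
    unfold eCoef
    rw [show r + (-l - 2) + 1 = r - l - 1 by ring, ← mul_assoc, ← mul_assoc,
      ← zpow_add₀ (by norm_num : (-1:ℚ) ≠ 0),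
      show r + l + 1 + (r - l - 1) = 2 * r by ring, zpow_mul]
    norm_num
    exact mul_nonneg (zpow_nonneg (by norm_num) _) (cb_nonneg _ _)
  · rw [show Finset.Icc (-r - 1) (-l - 2) = ∅ by apply Finset.Icc_eq_empty; omega]
    simp
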